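/- For N even and every nonzero λ ∈ ℂ, the charge Θ commutes with the transfer matrix and with the diagonal monodromy entries, and q-commutes with the off-diagonal ones: T(λ)Θ = Θ T(λ), A(λ)Θ = Θ A(λ), D(λ)Θ = Θ D(λ), Θ C(λ) = q C(λ) Θ, and B(λ)Θ = q Θ B(λ). -/

import Mathlib

open Matrix Complex Filter Topology

namespace SG

/-- Index set for the basis of `(ℂ^p)^{⊗N}`. -/
abbrev Idx (p N : ℕ) := Fin N → ZMod p

/-- Operators on `(ℂ^p)^{⊗N}`, realized as matrices. -/
abbrev Op (p N : ℕ) := Matrix (Idx p N) (Idx p N) ℂ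

/-- The square root of `q`: `q^{1/2} := q^{(p+1)/2}`. -/
noncomputable def qh (p : ℕ) (q : ℂ) : ℂ := q ^ ((p + 1) / 2)

/-- The operator `𝗎_n = u_n · (shift at site n)`, `𝗎_n|k⟩ = u_n |k-1⟩`. -/
noncomputable def uop (p N : ℕ) (u : Fin N → ℂ) (n : Fin N) : Op p N :=
  Matrix.of fun f g => if f = Function.update g n (g n - 1) then u n else 0

/-- The inverse of `𝗎_n`. -/
noncomputable def uopInv (p N : ℕ) (u : Fin N → ℂ) (n : Fin N) : Op p N :=
  Matrix.of fun f g => if f = Function.update g n (g n + 1) then (u n)⁻¹ else 0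

/-- The operator `𝗏_n = v_n · (clock at site n)`, `𝗏_n|k⟩ = v_n q^k |k⟩`. -/
noncomputable def vop (p N : ℕ) (q : ℂ) (v : Fin N → ℂ) (n : Fin N) : Op p N :=
  Matrix.diagonal fun g => v n * q ^ (g n).val

/-- The inverse of `𝗏_n`. -/
noncomputable def vopInv (p N : ℕ) (q : ℂ) (v : Fin N → ℂ) (n : Fin N) : Op p N :=
  Matrix.diagonal fun g => (v n * q ^ (g n).val)⁻¹

/-- The Lax matrix `L_n(λ)`. -/
noncomputable def Lax (p N : ℕ) [NeZero p] (q : ℂ) (κ ξ u v : Fin N → ℂ) (n : Fin N)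
    (lam : ℂ) : Matrix (Fin 2) (Fin 2) (Op p N) :=
  !![κ n • (uop p N u n *
        ((qh p q)⁻¹ • (κ n • vop p N q v n) + qh p q • ((κ n)⁻¹ • vopInv p N q v n))),
     (κ n / Complex.I) • ((lam / ξ n) • vop p N q v n - (lam / ξ n)⁻¹ • vopInv p N q v n);
     (κ n / Complex.I) • ((lam / ξ n) • vopInv p N q v n - (lam / ξ n)⁻¹ • vop p N q v n),
     κ n • (uopInv p N u n *
        (qh p q • ((κ n)⁻¹ • vop p N q v n) + (qh p q)⁻¹ • (κ n • vopInv p N q v n)))]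

/-- The monodromy matrix `M(λ) = L_N(λ) ⋯ L_1(λ)`. -/
noncomputable def Mon (p N : ℕ) [NeZero p] (q : ℂ) (κ ξ u v : Fin N → ℂ) (lam : ℂ) :
    Matrix (Fin 2) (Fin 2) (Op p N) :=
  (((List.finRange N).map fun n => Lax p N q κ ξ u v n lam).reverse).prod

/-- `A(λ)`, the (1,1) entry of the monodromy matrix. -/
noncomputable def Amat (p N : ℕ) [NeZero p] (q : ℂ) (κ ξ u v : Fin N → ℂ) (lam : ℂ) :
    Op p N := Mon p N q κ ξ u v lam 0 0

/-- `B(λ)`, the (1,2) entry of the monodromy matrix. -/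
noncomputable def Bmat (p N : ℕ) [NeZero p] (q : ℂ) (κ ξ u v : Fin N → ℂ) (lam : ℂ) :
    Op p N := Mon p N q κ ξ u v lam 0 1

/-- `C(λ)`, the (2,1) entry of the monodromy matrix. -/
noncomputable def Cmat (p N : ℕ) [NeZero p] (q : ℂ) (κ ξ u v : Fin N → ℂ) (lam : ℂ) :
    Op p N := Mon p N q κ ξ u v lam 1 0

/-- `D(λ)`, the (2,2) entry of the monodromy matrix. -/
noncomputable def Dmat (p N : ℕ) [NeZero p] (q : ℂ) (κ ξ u v : Fin N → ℂ) (lam : ℂ) :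
    Op p N := Mon p N q κ ξ u v lam 1 1

/-- The transfer matrix `T(λ) = A(λ) + D(λ)`. -/
noncomputable def Tmat (p N : ℕ) [NeZero p] (q : ℂ) (κ ξ u v : Fin N → ℂ) (lam : ℂ) :
    Op p N := Amat p N q κ ξ u v lam + Dmat p N q κ ξ u v lam

/-- The grading charge `Θ = ∏_{n=1}^N 𝗏_n^{(-1)^n}` (sites `n : Fin N` correspond to
the 1-indexed site `n+1`, whence the exponent `(-1)^{n+1}`); it is a diagonal operator. -/
noncomputable def Theta (p N : ℕ) (q : ℂ) (v : Fin N → ℂ) : Op p N :=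
  Matrix.diagonal fun g => ∏ n : Fin N, (v n * q ^ (g n).val) ^ ((-1 : ℤ) ^ ((n : ℕ) + 1))

/-- The inverse `Θ^{-1}` of the grading charge. -/
noncomputable def ThetaInv (p N : ℕ) (q : ℂ) (v : Fin N → ℂ) : Op p N :=
  Matrix.diagonal fun g => ∏ n : Fin N, (v n * q ^ (g n).val) ^ ((-1 : ℤ) ^ (n : ℕ))

/-- The average `𝒪(λ) = ∏_{k=1}^p O(q^k λ)` of a commuting family `O`. -/
noncomputable def avg (p N : ℕ) [NeZero p] (q : ℂ) (O : ℂ → Op p N) (lam : ℂ) : Op p N :=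
  ((List.range p).map fun k => O (q ^ (k + 1) * lam)).prod


section Aux

variable {p N : ℕ} [NeZero p]



/-- the diagonal entry function of Theta -/
noncomputable def th (p N : ℕ) (q : ℂ) (v : Fin N → ℂ) (g : Fin N → ZMod p) : ℂ :=
  ∏ n : Fin N, (v n * q ^ (g n).val) ^ ((-1 : ℤ) ^ ((n : ℕ) + 1))

lemma q_ne_zero {q : ℂ} (hp1 : 1 < p) (hq : IsPrimitiveRoot q p) : q ≠ 0 := by
  intro h
  have := hq.pow_eq_one
  rw [h, zero_pow (by omega)] at this
  exact one_ne_zero this.symm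

lemma pow_mod {q : ℂ} (hq : q ^ p = 1) (m : ℕ) : q ^ (m % p) = q ^ m := by
  conv_rhs => rw [← Nat.mod_add_div m p, pow_add, pow_mul, hq, one_pow, mul_one]

lemma chi_sub_one {q : ℂ} (hp1 : 1 < p) (hq : q ^ p = 1) (k : ZMod p) :
    q ^ (k - 1).val * q = q ^ k.val := by
  have : q ^ (k - 1).val * q = q ^ ((k - 1).val + 1) := by ring
  rw [this, ← pow_mod hq ((k-1).val + 1)]
  congr 1
  have h1 : ((1 : ZMod p)).val = 1 := by
    rw [ZMod.val_one_eq_one_mod, Nat.mod_eq_of_lt hp1]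
  have := ZMod.val_add (k - 1) 1
  rw [h1] at this
  rw [← this, sub_add_cancel]

lemma chi_add_one {q : ℂ} (hp1 : 1 < p) (hq : q ^ p = 1) (k : ZMod p) :
    q ^ (k + 1).val = q ^ k.val * q := by
  have := chi_sub_one hp1 hq (k + 1)
  rw [add_sub_cancel_right] at this
  exact this.symm

lemma prod_update (q : ℂ) (v : Fin N → ℂ) (g : Fin N → ZMod p) (n : Fin N) (k : ZMod p) :
    th p N q v (Function.update g n k) =
      (v n * q ^ k.val) ^ ((-1 : ℤ) ^ ((n : ℕ) + 1)) *
      ∏ m ∈ Finset.univ \ {n}, (v m * q ^ (g m).val) ^ ((-1 : ℤ) ^ ((m : ℕ) + 1)) := by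
  unfold th
  rw [show (fun m => (v m * q ^ ((Function.update g n k) m).val) ^ ((-1 : ℤ) ^ ((m : ℕ) + 1))) =
      Function.update (fun m => (v m * q ^ (g m).val) ^ ((-1 : ℤ) ^ ((m : ℕ) + 1))) n
        ((v n * q ^ k.val) ^ ((-1 : ℤ) ^ ((n : ℕ) + 1))) by
    funext m; by_cases h : m = n <;> simp [h, Function.update]]
  exact Finset.prod_update_of_mem (Finset.mem_univ n) _ _

lemma th_self (q : ℂ) (v : Fin N → ℂ) (g : Fin N → ZMod p) (n : Fin N) :
    th p N q v g = (v n * q ^ (g n).val) ^ ((-1 : ℤ) ^ ((n : ℕ) + 1)) *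
      ∏ m ∈ Finset.univ \ {n}, (v m * q ^ (g m).val) ^ ((-1 : ℤ) ^ ((m : ℕ) + 1)) := by
  have := prod_update q v g n (g n)
  rwa [Function.update_eq_self] at this

lemma th_shift_down {q : ℂ} (hp1 : 1 < p) (hqp : q ^ p = 1)
    (v : Fin N → ℂ) (g : Fin N → ZMod p) (n : Fin N) :
    th p N q v (Function.update g n (g n - 1)) =
      q ^ (-((-1 : ℤ) ^ ((n : ℕ) + 1))) * th p N q v g := by
  have hq0 : q ≠ 0 := fun h => by simp [h, zero_pow (by omega : p ≠ 0)] at hqp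
  rw [prod_update, th_self q v g n]
  have hkey : q ^ (g n - 1).val = q ^ (g n).val * q⁻¹ := by
    field_simp
    exact chi_sub_one hp1 hqp (g n)
  rw [hkey, show v n * (q ^ (g n).val * q⁻¹) = (v n * q ^ (g n).val) * q⁻¹ by ring,
    mul_zpow, show (q⁻¹ : ℂ) ^ ((-1 : ℤ) ^ ((n : ℕ) + 1)) = q ^ (-((-1 : ℤ) ^ ((n : ℕ) + 1))) by
      rw [_root_.zpow_neg, _root_.inv_zpow]]
  ring

lemma th_shift_up {q : ℂ} (hp1 : 1 < p) (hqp : q ^ p = 1)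
    (v : Fin N → ℂ) (g : Fin N → ZMod p) (n : Fin N) :
    th p N q v (Function.update g n (g n + 1)) =
      q ^ ((-1 : ℤ) ^ ((n : ℕ) + 1)) * th p N q v g := by
  rw [prod_update, th_self q v g n, chi_add_one hp1 hqp,
    show v n * (q ^ (g n).val * q) = (v n * q ^ (g n).val) * q by ring, mul_zpow, ← mul_assoc]
  ring



/-- `Theta` is the diagonal matrix of `th`. -/
lemma theta_eq (q : ℂ) (v : Fin N → ℂ) : Theta p N q v = Matrix.diagonal (th p N q v) := rfl

lemma theta_mul_diag (q : ℂ) (v : Fin N → ℂ) (d : Idx p N → ℂ) :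
    Theta p N q v * Matrix.diagonal d = Matrix.diagonal d * Theta p N q v := by
  rw [theta_eq, Matrix.diagonal_mul_diagonal, Matrix.diagonal_mul_diagonal]
  have : (fun g => th p N q v g * d g) = fun g => d g * th p N q v g := by
    funext g; exact mul_comm _ _
  rw [this]

lemma theta_vop (q : ℂ) (v : Fin N → ℂ) (n : Fin N) :
    Theta p N q v * vop p N q v n = vop p N q v n * Theta p N q v :=
  theta_mul_diag q v _

lemma theta_vopInv (q : ℂ) (v : Fin N → ℂ) (n : Fin N) :
    Theta p N q v * vopInv p N q v n = vopInv p N q v n * Theta p N q v :=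
  theta_mul_diag q v _

lemma theta_uop {q : ℂ} (hp1 : 1 < p) (hqp : q ^ p = 1) (u v : Fin N → ℂ) (n : Fin N) :
    Theta p N q v * uop p N u n =
      (q ^ (-((-1 : ℤ) ^ ((n : ℕ) + 1)))) • (uop p N u n * Theta p N q v) := by
  ext f g
  rw [theta_eq]
  simp only [Matrix.diagonal_mul, Matrix.mul_diagonal, Matrix.smul_apply, uop, Matrix.of_apply,
    smul_eq_mul]
  split_ifs with h
  · subst h
    rw [th_shift_down hp1 hqp]
    ring
  · ring

lemma theta_uopInv {q : ℂ} (hp1 : 1 < p) (hqp : q ^ p = 1) (u v : Fin N → ℂ) (n : Fin N) :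
    Theta p N q v * uopInv p N u n =
      (q ^ ((-1 : ℤ) ^ ((n : ℕ) + 1))) • (uopInv p N u n * Theta p N q v) := by
  ext f g
  rw [theta_eq]
  simp only [Matrix.diagonal_mul, Matrix.mul_diagonal, Matrix.smul_apply, uopInv, Matrix.of_apply,
    smul_eq_mul]
  split_ifs with h
  · subst h
    rw [th_shift_up hp1 hqp]
    ring
  · ring

/-- commutation combinators -/
lemma comm_smul {Θ X : Op p N} (hX : Θ * X = X * Θ) (a : ℂ) :
    Θ * (a • X) = (a • X) * Θ := by
  rw [mul_smul_comm, smul_mul_assoc, hX]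

lemma comm_add {Θ X Y : Op p N} (hX : Θ * X = X * Θ) (hY : Θ * Y = Y * Θ) :
    Θ * (X + Y) = (X + Y) * Θ := by rw [mul_add, add_mul, hX, hY]

lemma comm_sub {Θ X Y : Op p N} (hX : Θ * X = X * Θ) (hY : Θ * Y = Y * Θ) :
    Θ * (X - Y) = (X - Y) * Θ := by rw [mul_sub, sub_mul, hX, hY]

lemma conj_u_diag (q : ℂ) {Θ X U : Op p N} (hX : Θ * X = X * Θ) {a : ℤ}
    (hU : Θ * U = q ^ a • (U * Θ)) (c : ℂ) :
    Θ * (c • (U * X)) = q ^ a • (c • (U * X) * Θ) :=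
  calc Θ * (c • (U * X)) = c • (Θ * U * X) := by rw [mul_smul_comm, mul_assoc]
  _ = c • ((q ^ a • (U * Θ)) * X) := by rw [hU]
  _ = c • (q ^ a • (U * (Θ * X))) := by rw [smul_mul_assoc, mul_assoc]
  _ = c • (q ^ a • (U * (X * Θ))) := by rw [hX]
  _ = q ^ a • (c • (U * X) * Θ) := by
      rw [smul_comm, smul_mul_assoc, mul_assoc]

/-- conjugation relation by `Θ` with exponent pattern `s i + t j` -/
def Rel (q : ℂ) (Θ : Op p N) (s t : Fin 2 → ℤ) (M : Matrix (Fin 2) (Fin 2) (Op p N)) : Prop :=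
  ∀ i j, Θ * M i j = q ^ (s i + t j) • (M i j * Θ)

lemma rel_term {q : ℂ} (hq0 : q ≠ 0) {Θ X Y : Op p N} {a b : ℤ}
    (hX : Θ * X = q ^ a • (X * Θ)) (hY : Θ * Y = q ^ b • (Y * Θ)) :
    Θ * (X * Y) = q ^ (a + b) • (X * Y * Θ) := by
  calc Θ * (X * Y) = (q ^ a • (X * Θ)) * Y := by rw [← mul_assoc, hX]
  _ = q ^ a • (X * (Θ * Y)) := by rw [smul_mul_assoc, mul_assoc]
  _ = q ^ a • (X * (q ^ b • (Y * Θ))) := by rw [hY]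
  _ = (q ^ a * q ^ b) • (X * Y * Θ) := by
      rw [mul_smul_comm, smul_smul, mul_assoc]
  _ = q ^ (a + b) • (X * Y * Θ) := by rw [← zpow_add₀ hq0]

lemma Rel.mul {q : ℂ} (hq0 : q ≠ 0) {Θ : Op p N} {s1 t1 s2 t2 : Fin 2 → ℤ}
    {P Q : Matrix (Fin 2) (Fin 2) (Op p N)}
    (h1 : Rel q Θ s1 t1 P) (h2 : Rel q Θ s2 t2 Q)
    (hc : t1 0 + s2 0 = t1 1 + s2 1) :
    Rel q Θ (fun i => s1 i + (t1 0 + s2 0)) t2 (P * Q) := by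
  intro i j
  have hPQ : (P * Q) i j = P i 0 * Q 0 j + P i 1 * Q 1 j := by
    simp [Matrix.mul_apply, Fin.sum_univ_two]
  have e0 : Θ * (P i 0 * Q 0 j) =
      q ^ ((s1 i + t1 0) + (s2 0 + t2 j)) • (P i 0 * Q 0 j * Θ) :=
    rel_term hq0 (h1 i 0) (h2 0 j)
  have e1 : Θ * (P i 1 * Q 1 j) =
      q ^ ((s1 i + t1 1) + (s2 1 + t2 j)) • (P i 1 * Q 1 j * Θ) :=
    rel_term hq0 (h1 i 1) (h2 1 j)
  have h0 : (s1 i + t1 0) + (s2 0 + t2 j) = s1 i + (t1 0 + s2 0) + t2 j := by ring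
  have h1' : (s1 i + t1 1) + (s2 1 + t2 j) = s1 i + (t1 0 + s2 0) + t2 j := by
    rw [hc]; ring
  rw [hPQ, mul_add, add_mul, e0, e1, h0, h1', smul_add]

lemma rel_one {q : ℂ} (Θ : Op p N) : Rel q Θ ![0,1] ![0,-1] 1 := by
  intro i j
  fin_cases i <;> fin_cases j <;>
    simp [Matrix.one_apply, mul_one, one_mul]

lemma rel_lax {q : ℂ} (hp1 : 1 < p) (hqp : q ^ p = 1) (hq0 : q ≠ 0)
    (κ ξ u v : Fin N → ℂ) (n : Fin N) (lam : ℂ) :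
    Rel q (Theta p N q v) ![-((-1 : ℤ) ^ ((n : ℕ) + 1)), 0] ![0, (-1 : ℤ) ^ ((n : ℕ) + 1)]
      (Lax p N q κ ξ u v n lam) := by
  set e : ℤ := (-1 : ℤ) ^ ((n : ℕ) + 1) with he
  have hdiagX : Theta p N q v * ((qh p q)⁻¹ • (κ n • vop p N q v n) +
      qh p q • ((κ n)⁻¹ • vopInv p N q v n)) = ((qh p q)⁻¹ • (κ n • vop p N q v n) +
      qh p q • ((κ n)⁻¹ • vopInv p N q v n)) * Theta p N q v :=
    comm_add (comm_smul (comm_smul (theta_vop q v n) _) _)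
      (comm_smul (comm_smul (theta_vopInv q v n) _) _)
  have hdiagY : Theta p N q v * (qh p q • ((κ n)⁻¹ • vop p N q v n) +
      (qh p q)⁻¹ • (κ n • vopInv p N q v n)) = (qh p q • ((κ n)⁻¹ • vop p N q v n) +
      (qh p q)⁻¹ • (κ n • vopInv p N q v n)) * Theta p N q v :=
    comm_add (comm_smul (comm_smul (theta_vop q v n) _) _)
      (comm_smul (comm_smul (theta_vopInv q v n) _) _)
  have hB : Theta p N q v * ((lam / ξ n) • vop p N q v n -
      (lam / ξ n)⁻¹ • vopInv p N q v n) = ((lam / ξ n) • vop p N q v n -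
      (lam / ξ n)⁻¹ • vopInv p N q v n) * Theta p N q v :=
    comm_sub (comm_smul (theta_vop q v n) _) (comm_smul (theta_vopInv q v n) _)
  have hC : Theta p N q v * ((lam / ξ n) • vopInv p N q v n -
      (lam / ξ n)⁻¹ • vop p N q v n) = ((lam / ξ n) • vopInv p N q v n -
      (lam / ξ n)⁻¹ • vop p N q v n) * Theta p N q v :=
    comm_sub (comm_smul (theta_vopInv q v n) _) (comm_smul (theta_vop q v n) _)
  intro i j
  fin_cases i <;> fin_cases j <;>
    simp only [Lax, Fin.zero_eta, Fin.mk_one, Matrix.cons_val', Matrix.cons_val_zero,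
      Matrix.cons_val_one, Matrix.head_cons, Matrix.head_fin_const, Matrix.empty_val',
      Matrix.cons_val_fin_one, Fin.isValue]
  · rw [show (-e + 0 : ℤ) = -e from by ring, he]
    exact conj_u_diag q hdiagX (theta_uop hp1 hqp u v n) (κ n)
  · rw [show (-e + e : ℤ) = 0 from by ring, zpow_zero, one_smul]
    exact comm_smul hB _
  · rw [show ((0:ℤ) + 0 : ℤ) = 0 from by ring, zpow_zero, one_smul]
    exact comm_smul hC _
  · rw [show ((0:ℤ) + e : ℤ) = e from by ring, he]
    exact conj_u_diag q hdiagY (theta_uopInv hp1 hqp u v n) (κ n)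

end Aux

/-- For `N` even and every nonzero `λ ∈ ℂ`, the charge `Θ` commutes with the
transfer matrix and with the diagonal monodromy entries, and `q`-commutes with the off-diagonal
ones. -/
theorem statement0 (p N : ℕ) [NeZero p] (hp : Odd p) (hp1 : 1 < p)
    (q : ℂ) (hq : IsPrimitiveRoot q p)
    (κ ξ u v : Fin N → ℂ) (hκ : ∀ n, κ n ≠ 0) (hξ : ∀ n, ξ n ≠ 0)
    (hu : ∀ n, ‖u n‖ = 1) (hv : ∀ n, ‖v n‖ = 1)
    (hN : 0 < N) (hNeven : Even N) (lam : ℂ) (hlam : lam ≠ 0) :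
    Tmat p N q κ ξ u v lam * Theta p N q v = Theta p N q v * Tmat p N q κ ξ u v lam ∧
    Amat p N q κ ξ u v lam * Theta p N q v = Theta p N q v * Amat p N q κ ξ u v lam ∧
    Dmat p N q κ ξ u v lam * Theta p N q v = Theta p N q v * Dmat p N q κ ξ u v lam ∧
    Theta p N q v * Cmat p N q κ ξ u v lam = q • (Cmat p N q κ ξ u v lam * Theta p N q v) ∧
    Bmat p N q κ ξ u v lam * Theta p N q v = q • (Theta p N q v * Bmat p N q κ ξ u v lam) := by
  have hqp : q ^ p = 1 := hq.pow_eq_one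
  have hq0 : q ≠ 0 := q_ne_zero hp1 hq
  set Θ := Theta p N q v with hΘ
  set f : Fin N → Matrix (Fin 2) (Fin 2) (Op p N) := fun n => Lax p N q κ ξ u v n lam with hf
  set l : List (Matrix (Fin 2) (Fin 2) (Op p N)) := (List.finRange N).map f with hl
  have hlen : l.length = N := by simp [hl]
  have key : ∀ m, m ≤ N → Rel q Θ (if m % 2 = 0 then ![0,1] else ![1,0]) ![0,-1]
      ((l.take m).reverse.prod) := by
    intro m
    induction m with
    | zero => intro _; simpa using rel_one (q := q) Θ
    | succ m ih =>
      intro hm1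
      have hm : m < N := hm1
      have hrec := ih (le_of_lt hm)
      have hget : l[m]? = some (f ⟨m, hm⟩) := by
        rw [List.getElem?_eq_getElem (show m < l.length by omega)]
        simp [hl, List.getElem_finRange]
      have hprod : ((l.take (m+1)).reverse).prod = f ⟨m, hm⟩ * ((l.take m).reverse).prod := by
        rw [List.take_succ, hget]
        simp
      have hlax := rel_lax (N := N) hp1 hqp hq0 κ ξ u v ⟨m, hm⟩ lam
      rw [hprod]
      rcases Nat.even_or_odd m with hpar | hpar
      · have hm2 : m % 2 = 0 := Nat.even_iff.mp hpar
        have he : ((-1 : ℤ) ^ (((⟨m, hm⟩ : Fin N) : ℕ) + 1)) = -1 :=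
          Odd.neg_one_pow (by simpa [Nat.even_add_one] using hpar.add_one)
        rw [he] at hlax
        rw [if_pos hm2] at hrec
        have hc : (![0, (-1:ℤ)] 0 + ![0,1] 0 : ℤ) = ![0,(-1:ℤ)] 1 + ![0,1] 1 := by simp
        have hmul := Rel.mul hq0 hlax hrec hc
        have hs : (fun i => ![-(-1:ℤ), 0] i + (![0,(-1:ℤ)] 0 + ![0,1] 0)) =
            (if (m+1) % 2 = 0 then ![0,1] else ![1,0]) := by
          have : (m+1) % 2 = 1 := by omega
          rw [this]
          funext i; fin_cases i <;> simp
        rwa [hs] at hmul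
      · have hm2 : m % 2 ≠ 0 := by
          have := Nat.odd_iff.mp hpar; omega
        have he : ((-1 : ℤ) ^ (((⟨m, hm⟩ : Fin N) : ℕ) + 1)) = 1 :=
          Even.neg_one_pow (by simpa [Nat.even_add_one, Nat.not_even_iff_odd] using hpar)
        rw [he] at hlax
        rw [if_neg hm2] at hrec
        have hc : (![0, (1:ℤ)] 0 + ![1,0] 0 : ℤ) = ![0,(1:ℤ)] 1 + ![1,0] 1 := by simp
        have hmul := Rel.mul hq0 hlax hrec hc
        have hs : (fun i => ![-(1:ℤ), 0] i + (![0,(1:ℤ)] 0 + ![1,0] 0)) =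
            (if (m+1) % 2 = 0 then ![0,1] else ![1,0]) := by
          have : (m+1) % 2 = 0 := by omega
          rw [this]
          funext i; fin_cases i <;> simp
        rwa [hs] at hmul
  have htake : l.take N = l := List.take_of_length_le (le_of_eq hlen)
  have hMon : Mon p N q κ ξ u v lam = (l.reverse).prod := rfl
  have hN2 : N % 2 = 0 := Nat.even_iff.mp hNeven
  have hfin := key N le_rfl
  rw [htake, hN2] at hfin
  simp only [if_pos rfl] at hfin
  have hA : Θ * Amat p N q κ ξ u v lam = Amat p N q κ ξ u v lam * Θ := by
    have := hfin 0 0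
    simpa [Amat, hMon] using this
  have hD : Θ * Dmat p N q κ ξ u v lam = Dmat p N q κ ξ u v lam * Θ := by
    have := hfin 1 1
    simpa [Dmat, hMon] using this
  have hC : Θ * Cmat p N q κ ξ u v lam = q • (Cmat p N q κ ξ u v lam * Θ) := by
    have := hfin 1 0
    simpa [Cmat, hMon] using this
  have hB : Θ * Bmat p N q κ ξ u v lam = q⁻¹ • (Bmat p N q κ ξ u v lam * Θ) := by
    have := hfin 0 1
    simpa [Bmat, hMon, _root_.zpow_neg] using this
  refine ⟨?_, hA.symm, hD.symm, hC, ?_⟩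
  · rw [Tmat, add_mul, mul_add, hA, hD]
  · rw [hB, smul_smul, mul_inv_cancel₀ hq0, one_smul]

end SG
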